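/- Let X be an infinite set and A = Alt(X) the even finitary permutations. If F = ⟨FSym(X), g₂,…,g_n⟩ ≤ Sym(X) is such that all commutators of pairs of elements from {g₂,…,g_n} ∪ FSym(X) lie in Alt(X), then the commutator subgroup [F, F] equals Alt(X). -/

import Mathlib

/-- The group of finitary permutations of `X`: those with finite support. -/
def FSym (X : Type*) : Subgroup (Equiv.Perm X) where
  carrier := {g | {x | g x ≠ x}.Finite}
  one_mem' := by simp
  mul_mem' := by
    intro a b ha hb
    refine (Set.Finite.union ha hb).subset fun x hx => ?_
    simp only [Set.mem_setOf_eq, Set.mem_union, Equiv.Perm.mul_apply] at hx ⊢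
    by_cases h : b x = x
    · left; rwa [h] at hx
    · right; exact h
  inv_mem' := by
    intro a ha
    refine ha.subset fun x hx => ?_
    simp only [Set.mem_setOf_eq] at hx ⊢
    intro h
    exact hx (Equiv.Perm.inv_eq_iff_eq.mpr h.symm)

/-- A permutation is even (finitary) if it is a product of an even number of transpositions. -/
def IsEvenPerm {X : Type*} [DecidableEq X] (g : Equiv.Perm X) : Prop :=
  ∃ l : List (Equiv.Perm X), (∀ τ ∈ l, τ.IsSwap) ∧ Even l.length ∧ g = l.prod

/-- A permutation is odd (finitary) if it is a product of an odd number of transpositions. -/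
def IsOddPerm {X : Type*} [DecidableEq X] (g : Equiv.Perm X) : Prop :=
  ∃ l : List (Equiv.Perm X), (∀ τ ∈ l, τ.IsSwap) ∧ Odd l.length ∧ g = l.prod

/-- `Alt(X)`: the group of even finitary permutations of `X`. -/
def AltGroup (X : Type*) [DecidableEq X] : Subgroup (Equiv.Perm X) where
  carrier := {g | IsEvenPerm g}
  one_mem' := ⟨[], by simp, by simp, by simp⟩
  mul_mem' := by
    rintro a b ⟨l₁, hs₁, he₁, hp₁⟩ ⟨l₂, hs₂, he₂, hp₂⟩
    refine ⟨l₁ ++ l₂, ?_, by simpa using he₁.add he₂, by rw [hp₁, hp₂, List.prod_append]⟩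
    intro τ hτ
    rcases List.mem_append.mp hτ with h | h
    exacts [hs₁ τ h, hs₂ τ h]
  inv_mem' := by
    rintro a ⟨l, hs, he, hp⟩
    refine ⟨(l.map fun x => x⁻¹).reverse, ?_, by simpa using he, ?_⟩
    · intro τ hτ
      simp only [List.mem_reverse, List.mem_map] at hτ
      obtain ⟨σ, hσ, rfl⟩ := hτ
      obtain ⟨x, y, hxy, rfl⟩ := hs σ hσ
      exact ⟨x, y, hxy, by simp⟩
    · rw [hp, List.prod_inv_reverse]

section Aux
variable {X : Type*} [DecidableEq X]

lemma swap_sq_eq (a b c : X) (hab : a ≠ b) (hac : a ≠ c) (hbc : b ≠ c) :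
    Equiv.swap a b * Equiv.swap a c =
      Equiv.swap a c * Equiv.swap a b * (Equiv.swap a c)⁻¹ * (Equiv.swap a b)⁻¹ := by
  ext x
  simp only [Equiv.swap_inv, Equiv.Perm.mul_apply]
  by_cases hxa : x = a
  · subst hxa; simp [Equiv.swap_apply_def, hab, hac, hbc, hab.symm, hac.symm, hbc.symm]
  by_cases hxb : x = b
  · subst hxb; simp [Equiv.swap_apply_def, hab, hac, hbc, hab.symm, hac.symm, hbc.symm]
  by_cases hxc : x = c
  · subst hxc; simp [Equiv.swap_apply_def, hab, hac, hbc, hab.symm, hac.symm, hbc.symm]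
  · simp [Equiv.swap_apply_def, hxa, hxb, hxc]

lemma conj_list_prod (g : Equiv.Perm X) :
    ∀ l : List (Equiv.Perm X), g * l.prod * g⁻¹ = (l.map fun τ => g * τ * g⁻¹).prod
  | [] => by simp
  | τ :: l => by
    rw [List.map_cons, List.prod_cons, List.prod_cons, ← conj_list_prod g l]
    group

lemma altGroup_normal : (AltGroup X).Normal := by
  constructor
  rintro n ⟨l, hs, he, hp⟩ g
  refine ⟨l.map fun τ => g * τ * g⁻¹, ?_, by simpa using he, ?_⟩
  · intro τ hτ
    simp only [List.mem_map] at hτ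
    obtain ⟨σ, hσ, rfl⟩ := hτ
    obtain ⟨x, y, hxy, rfl⟩ := hs σ hσ
    exact ⟨g x, g y, fun h => hxy (g.injective h), (Equiv.swap_apply_apply g x y).symm⟩
  · rw [hp, ← conj_list_prod]

lemma prod_swaps_mem (K : Subgroup (Equiv.Perm X))
    (hswap : ∀ a b c d : X, a ≠ b → c ≠ d → Equiv.swap a b * Equiv.swap c d ∈ K) :
    ∀ l : List (Equiv.Perm X), (∀ τ ∈ l, τ.IsSwap) → Even l.length → l.prod ∈ K
  | [], _, _ => K.one_mem
  | [τ], _, he => absurd he (by simp)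
  | σ :: τ :: l, hs, he => by
    rw [List.prod_cons, List.prod_cons, ← mul_assoc]
    obtain ⟨a, b, hab, rfl⟩ := hs σ (by simp)
    obtain ⟨c, d, hcd, rfl⟩ := hs τ (by simp)
    refine K.mul_mem (hswap a b c d hab hcd)
      (prod_swaps_mem K hswap l (fun t ht => hs t (by simp [ht])) ?_)
    rw [List.length_cons, List.length_cons, Nat.even_add_one, Nat.even_add_one, not_not] at he
    exact he

end Aux

open scoped commutatorElement

/-- Let `X` be an infinite set and `g₂, …, g_n ∈ Sym(X)` (here a family `g : Fin m →
Sym(X)`). If all commutators of pairs of elements from `FSym(X) ∪ {g₂, …, g_n}` lie in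
`Alt(X)`, then the commutator subgroup of `F = ⟨FSym(X), g₂, …, g_n⟩` equals `Alt(X)`. -/
theorem commutator_subgroup_eq_alt (X : Type*) [Infinite X] [DecidableEq X]
    (m : ℕ) (g : Fin m → Equiv.Perm X)
    (hcomm : ∀ a b : Equiv.Perm X,
      a ∈ (FSym X : Set (Equiv.Perm X)) ∪ Set.range g →
      b ∈ (FSym X : Set (Equiv.Perm X)) ∪ Set.range g →
      a⁻¹ * b⁻¹ * a * b ∈ AltGroup X) :
    ⁅Subgroup.closure ((FSym X : Set (Equiv.Perm X)) ∪ Set.range g),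
        Subgroup.closure ((FSym X : Set (Equiv.Perm X)) ∪ Set.range g)⁆ =
      AltGroup X := by
  haveI : (AltGroup X).Normal := altGroup_normal
  set S := (FSym X : Set (Equiv.Perm X)) ∪ Set.range g with hS
  set F := Subgroup.closure S with hF
  -- swaps are in F
  have hswapF : ∀ a b : X, Equiv.swap a b ∈ F := by
    intro a b
    refine Subgroup.subset_closure (Or.inl ?_)
    show Set.Finite {x | Equiv.swap a b x ≠ x}
    refine (Set.toFinite ({a, b} : Set X)).subset fun x hx => ?_
    simp only [Set.mem_setOf_eq] at hx
    by_contra hmem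
    simp only [Set.mem_insert_iff, Set.mem_singleton_iff, not_or] at hmem
    exact hx (Equiv.swap_apply_of_ne_of_ne hmem.1 hmem.2)
  apply le_antisymm
  · -- [F, F] ≤ Alt
    rw [Subgroup.commutator_le]
    intro p hp q hq
    let π := QuotientGroup.mk' (AltGroup X)
    have key : ∀ p q : Equiv.Perm X, p ∈ F → q ∈ F → Commute (π p) (π q) := by
      intro p q hp hq
      induction hp, hq using Subgroup.closure_induction₂ with
      | mem a b ha hb =>
        have h1 : ⁅a⁻¹, b⁻¹⁆ ∈ AltGroup X := by
          simpa [commutatorElement_def] using hcomm a b ha hb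
        have h2 : π ⁅a⁻¹, b⁻¹⁆ = 1 := (QuotientGroup.eq_one_iff _).mpr h1
        rw [map_commutatorElement] at h2
        have h3 : Commute (π a⁻¹) (π b⁻¹) := commutatorElement_eq_one_iff_commute.mp h2
        have h4 := h3.inv_left.inv_right
        simpa using h4
      | one_left x hx => exact Commute.one_left _
      | one_right x hx => exact Commute.one_right _
      | mul_left x y z hx hy hz h1 h2 => simpa only [map_mul] using h1.mul_left h2
      | mul_right y z x hy hz hx h1 h2 => simpa only [map_mul] using h1.mul_right h2
      | inv_left x y hx hy h => simpa only [map_inv] using h.inv_left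
      | inv_right x y hx hy h => simpa only [map_inv] using h.inv_right
    have hc : π ⁅p, q⁆ = 1 := by
      rw [map_commutatorElement]
      exact commutatorElement_eq_one_iff_commute.mpr (key p q hp hq)
    exact (QuotientGroup.eq_one_iff _).mp hc
  · -- Alt ≤ [F, F]
    have hL1 : ∀ a b c : X, a ≠ b → a ≠ c →
        Equiv.swap a b * Equiv.swap a c ∈ ⁅F, F⁆ := by
      intro a b c hab hac
      by_cases hbc : b = c
      · subst hbc; rw [Equiv.swap_mul_self]; exact Subgroup.one_mem _
      · rw [swap_sq_eq a b c hab hac hbc, ← commutatorElement_def]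
        exact Subgroup.commutator_mem_commutator (hswapF a c) (hswapF a b)
    have hswap : ∀ a b c d : X, a ≠ b → c ≠ d →
        Equiv.swap a b * Equiv.swap c d ∈ ⁅F, F⁆ := by
      intro a b c d hab hcd
      by_cases hac : a = c
      · subst hac; exact hL1 a b d hab hcd
      · have key : (Equiv.swap a b * Equiv.swap a c) * (Equiv.swap a c * Equiv.swap c d) =
            Equiv.swap a b * Equiv.swap c d := by
          rw [mul_assoc, ← mul_assoc (Equiv.swap a c), Equiv.swap_mul_self, one_mul]
        rw [← key]
        refine Subgroup.mul_mem _ (hL1 a b c hab hac) ?_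
        rw [Equiv.swap_comm a c]
        exact hL1 c a d (Ne.symm hac) hcd
    intro x hx
    obtain ⟨l, hs, he, hp⟩ := (hx : IsEvenPerm x)
    rw [hp]
    exact prod_swaps_mem _ hswap l hs he
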